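/- The strict asymptotic density (with respect to the sup-norm) of the set of visible points in ℤ^2 — nonzero points whose two coordinates are coprime — equals 6/π², i.e. lim_{n→∞} #{(x,y) ∈ ℤ² : max(|x|,|y|) ≤ n, gcd(x,y)=1} / (2n+1)² = 6/π². -/

import Mathlib

open Filter

section
open ArithmeticFunction Finset


lemma hasSum_moebius_div_sq :
    HasSum (fun d : ℕ => (moebius d : ℝ) / (d : ℝ) ^ 2) (6 / Real.pi ^ 2) := by
  have hs : (1 : ℝ) < (2 : ℂ).re := by norm_num
  have hsummC : LSeriesSummable (fun n => (moebius n : ℂ)) 2 :=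
    ArithmeticFunction.LSeriesSummable_moebius_iff.mpr hs
  have hL : LSeries (fun n => ((zeta n : ℕ) : ℂ)) 2 * LSeries (fun n => (moebius n : ℂ)) 2 = 1 :=
    ArithmeticFunction.LSeries_zeta_mul_Lseries_moebius hs
  have hz : LSeries (fun n => ((zeta n : ℕ) : ℂ)) 2 = riemannZeta 2 :=
    ArithmeticFunction.LSeries_zeta_eq_riemannZeta hs
  rw [hz, riemannZeta_two] at hL
  have hpi : ((Real.pi : ℂ) ^ 2 / 6) ≠ 0 := by
    simp [Real.pi_ne_zero, pow_eq_zero_iff]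
  have hLm : LSeries (fun n => (moebius n : ℂ)) 2 = ((6 / Real.pi ^ 2 : ℝ) : ℂ) := by
    have h2 := eq_inv_of_mul_eq_one_right hL
    rw [h2]
    push_cast
    rw [inv_div]
  -- terms
  have hterm : ∀ n : ℕ, LSeries.term (fun n => (moebius n : ℂ)) 2 n
      = (((moebius n : ℝ) / (n : ℝ) ^ 2 : ℝ) : ℂ) := by
    intro n
    rcases eq_or_ne n 0 with rfl | hn
    · simp [LSeries.term]
    · rw [LSeries.term_of_ne_zero hn, Complex.cpow_ofNat]
      push_cast
      ring
  have hsum2 : Summable fun n => (((moebius n : ℝ) / (n : ℝ) ^ 2 : ℝ) : ℂ) := by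
    have := hsummC
    unfold LSeriesSummable at this
    simpa [funext hterm] using this
  have hsumR : Summable fun n : ℕ => (moebius n : ℝ) / (n : ℝ) ^ 2 := by
    rwa [Complex.summable_ofReal] at hsum2
  have htsum : ∑' n, (((moebius n : ℝ) / (n : ℝ) ^ 2 : ℝ) : ℂ) = ((6 / Real.pi ^ 2 : ℝ) : ℂ) := by
    rw [← hLm]
    unfold LSeries
    exact tsum_congr fun n => (hterm n).symm
  rw [← Complex.ofReal_tsum] at htsum
  have := Complex.ofReal_injective htsum
  exact this ▸ hsumR.hasSum


lemma count_mult (n d : ℕ) (hd : 1 ≤ d) :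
    ((Finset.Icc (-(n:ℤ)) n).filter (fun x => (d:ℤ) ∣ x)).card = 2 * (n / d) + 1 := by
  set m := n / d with hm
  have himg : (Finset.Icc (-(n:ℤ)) n).filter (fun x => (d:ℤ) ∣ x)
      = (Finset.Icc (-(m:ℤ)) m).image (fun k : ℤ => k * (d:ℤ)) := by
    ext x
    simp only [Finset.mem_filter, Finset.mem_Icc, Finset.mem_image]
    constructor
    · rintro ⟨⟨h1, h2⟩, c, rfl⟩
      refine ⟨c, ⟨?_, ?_⟩, by ring⟩ <;>
      · have hc : c.natAbs * d ≤ n := by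
          have h3 : ((d:ℤ) * c).natAbs = c.natAbs * d := by
            rw [Int.natAbs_mul]; simp [Nat.mul_comm]
          omega
        have h4 : c.natAbs ≤ m := by
          rw [hm, Nat.le_div_iff_mul_le (by omega)]; exact hc
        omega
    · rintro ⟨k, ⟨h1, h2⟩, rfl⟩
      have hk : k.natAbs ≤ m := by omega
      have h5 : k.natAbs * d ≤ n := by
        calc k.natAbs * d ≤ m * d := by exact Nat.mul_le_mul_right d hk
        _ ≤ n := Nat.div_mul_le_self n d
      have h6 : (k * (d:ℤ)).natAbs = k.natAbs * d := by
        rw [Int.natAbs_mul]; simp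
      exact ⟨by omega, ⟨k, by ring⟩⟩
  rw [himg, Finset.card_image_of_injective _ (fun a b h => by
    have hd0 : (d:ℤ) ≠ 0 := by exact_mod_cast Nat.one_le_iff_ne_zero.mp hd
    exact mul_right_cancel₀ hd0 h)]
  rw [Int.card_Icc]
  simp only [hm]
  omega

lemma count_grid (n d : ℕ) (hd : 1 ≤ d) :
    (((Finset.Icc (-(n:ℤ)) n ×ˢ Finset.Icc (-(n:ℤ)) n)).filter
      (fun p : ℤ × ℤ => (d:ℤ) ∣ p.1 ∧ (d:ℤ) ∣ p.2)).card = (2 * (n / d) + 1) ^ 2 := by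
  rw [Finset.filter_product, Finset.card_product, count_mult n d hd, sq]

lemma indicator_sum (n : ℕ) (p : ℤ × ℤ) (hp : p ≠ 0)
    (h1 : p.1.natAbs ≤ n) (h2 : p.2.natAbs ≤ n) :
    (if Int.gcd p.1 p.2 = 1 then (1:ℤ) else 0)
      = ∑ d ∈ Finset.Icc 1 n, (if (d:ℤ) ∣ p.1 ∧ (d:ℤ) ∣ p.2 then moebius d else 0) := by
  set g := Int.gcd p.1 p.2 with hg
  have hg0 : g ≠ 0 := by
    rw [hg, Ne, Int.gcd_eq_zero_iff]
    intro ⟨ha, hb⟩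
    exact hp (Prod.ext ha hb)
  have hgn : g ≤ n := by
    rcases (show p.1 ≠ 0 ∨ p.2 ≠ 0 by
      by_contra h; push_neg at h; exact hp (Prod.ext h.1 h.2)) with h | h
    · exact le_trans (Nat.le_of_dvd (Int.natAbs_pos.mpr h)
        (Int.natCast_dvd.mp (Int.gcd_dvd_left _ _))) h1
    · exact le_trans (Nat.le_of_dvd (Int.natAbs_pos.mpr h)
        (Int.natCast_dvd.mp (Int.gcd_dvd_right _ _))) h2
  have hdvd : ∀ d : ℕ, ((d:ℤ) ∣ p.1 ∧ (d:ℤ) ∣ p.2) ↔ d ∣ g := by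
    intro d
    constructor
    · rintro ⟨ha, hb⟩
      exact Nat.dvd_gcd (Int.natCast_dvd.mp ha) (Int.natCast_dvd.mp hb)
    · intro hd
      have h3 : (d:ℤ) ∣ (g:ℤ) := Int.natCast_dvd_natCast.mpr hd
      exact ⟨h3.trans (Int.gcd_dvd_left _ _), h3.trans (Int.gcd_dvd_right _ _)⟩
  calc (if g = 1 then (1:ℤ) else 0)
      = (1 : ArithmeticFunction ℤ) g := by rw [ArithmeticFunction.one_apply]
    _ = ((moebius * ((zeta : ArithmeticFunction ℕ) : ArithmeticFunction ℤ))) g := by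
        rw [ArithmeticFunction.moebius_mul_coe_zeta]
    _ = ∑ d ∈ g.divisors, moebius d := by
        rw [ArithmeticFunction.coe_mul_zeta_apply]
    _ = ∑ d ∈ (Finset.Icc 1 n).filter (· ∣ g), moebius d := by
        congr 1
        ext d
        simp only [Nat.mem_divisors, Finset.mem_filter, Finset.mem_Icc]
        constructor
        · rintro ⟨hd, -⟩
          exact ⟨⟨Nat.one_le_iff_ne_zero.mpr (fun h => hg0 (by subst h; simpa using hd)),
            le_trans (Nat.le_of_dvd (Nat.pos_of_ne_zero hg0) hd) hgn⟩, hd⟩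
        · rintro ⟨-, hd⟩
          exact ⟨hd, hg0⟩
    _ = ∑ d ∈ Finset.Icc 1 n, (if d ∣ g then moebius d else 0) := by
        rw [Finset.sum_filter]
    _ = ∑ d ∈ Finset.Icc 1 n, (if (d:ℤ) ∣ p.1 ∧ (d:ℤ) ∣ p.2 then moebius d else 0) := by
        refine Finset.sum_congr rfl fun d _ => ?_
        by_cases h : d ∣ g
        · simp [h, (hdvd d).mpr h]
        · rw [if_neg h, if_neg (fun hc => h ((hdvd d).mp hc))]

lemma main_count (n : ℕ) :
    (((Finset.Icc (-(n:ℤ)) n ×ˢ Finset.Icc (-(n:ℤ)) n).filter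
      (fun p : ℤ × ℤ => Int.gcd p.1 p.2 = 1)).card : ℤ)
    = ∑ d ∈ Finset.Icc 1 n, moebius d * ((2 * ((n / d : ℕ) : ℤ) + 1) ^ 2 - 1) := by
  set B := Finset.Icc (-(n:ℤ)) n ×ˢ Finset.Icc (-(n:ℤ)) n with hB
  have h0mem : (0 : ℤ × ℤ) ∈ B := by
    simp only [hB, Finset.mem_product, Finset.mem_Icc]
    constructor <;> constructor <;> simp [Int.neg_nonpos_of_nonneg]
  have hfe : B.filter (fun p : ℤ × ℤ => Int.gcd p.1 p.2 = 1)
      = (B.erase 0).filter (fun p : ℤ × ℤ => Int.gcd p.1 p.2 = 1) := by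
    rw [Finset.filter_erase]
    rw [Finset.erase_eq_of_notMem]
    simp [Finset.mem_filter]
  rw [hfe, Finset.card_filter]
  push_cast
  have hpt : ∀ p ∈ B.erase 0, (if Int.gcd p.1 p.2 = 1 then (1:ℤ) else 0)
      = ∑ d ∈ Finset.Icc 1 n, (if (d:ℤ) ∣ p.1 ∧ (d:ℤ) ∣ p.2 then moebius d else 0) := by
    intro p hp
    obtain ⟨hp0, hpB⟩ := Finset.mem_erase.mp hp
    simp only [hB, Finset.mem_product, Finset.mem_Icc] at hpB
    exact indicator_sum n p hp0 (by omega) (by omega)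
  rw [Finset.sum_congr rfl hpt, Finset.sum_comm]
  refine Finset.sum_congr rfl fun d hd => ?_
  obtain ⟨hd1, hdn⟩ := Finset.mem_Icc.mp hd
  have hcard : ((B.erase 0).filter (fun p : ℤ × ℤ => (d:ℤ) ∣ p.1 ∧ (d:ℤ) ∣ p.2)).card
      = (2 * (n / d) + 1) ^ 2 - 1 := by
    rw [Finset.filter_erase, Finset.card_erase_of_mem, count_grid n d hd1]
    rw [Finset.mem_filter]
    exact ⟨h0mem, ⟨dvd_zero _, dvd_zero _⟩⟩
  calc ∑ p ∈ B.erase 0, (if (d:ℤ) ∣ p.1 ∧ (d:ℤ) ∣ p.2 then moebius d else 0)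
      = ∑ p ∈ (B.erase 0).filter (fun p : ℤ × ℤ => (d:ℤ) ∣ p.1 ∧ (d:ℤ) ∣ p.2),
          (moebius d : ℤ) := (Finset.sum_filter _ _).symm
    _ = ((2 * (n / d) + 1) ^ 2 - 1 : ℕ) • (moebius d : ℤ) := by
        rw [Finset.sum_const, hcard]
    _ = (moebius d : ℤ) * (2 * ((n / d : ℕ) : ℤ) + 1) ^ 2 - moebius d := by
        have h1 : 1 ≤ (2 * (n / d) + 1) ^ 2 := Nat.one_le_iff_ne_zero.mpr (by positivity)
        rw [nsmul_eq_mul]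
        push_cast [h1]
        ring
    _ = moebius d * ((2 * ((n / d : ℕ) : ℤ) + 1) ^ 2 - 1) := by ring


lemma term_bound (n d : ℕ) (hd : 1 ≤ d) :
    |((2 * ((n / d : ℕ) : ℝ) + 1) ^ 2 - 1) / (2 * (n:ℝ) + 1) ^ 2 - 1 / (d:ℝ) ^ 2|
      ≤ 2 / ((d:ℝ) * (2 * (n:ℝ) + 1)) + 2 / (2 * (n:ℝ) + 1) ^ 2 := by
  have hq := Nat.div_add_mod n d
  have hr : n % d < d := Nat.mod_lt n (by omega)
  set q := n / d with hqdef
  set r := n % d with hrdef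
  have hqZ : (d:ℤ) * q + r = n := by exact_mod_cast hq
  have hkey : |((2 * q + 1 : ℤ)) * d - (2 * n + 1)| ≤ (d : ℤ) := by
    have h2 : ((2 * q + 1 : ℤ)) * d - (2 * n + 1) = (d:ℤ) - 2 * r - 1 := by
      linear_combination 2 * hqZ
    have hrZ : (r:ℤ) < d := by exact_mod_cast hr
    have hr0 : (0:ℤ) ≤ r := Int.natCast_nonneg r
    rw [h2, abs_le]
    omega
  set N : ℝ := 2 * (n:ℝ) + 1 with hN
  set D : ℝ := (d:ℝ) with hD
  set B : ℝ := 2 * (q:ℝ) + 1 with hBdef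
  have hNpos : 0 < N := by positivity
  have hDpos : (0:ℝ) < D := by
    simp only [hD]; exact_mod_cast (by omega : 0 < d)
  have hD1 : (1:ℝ) ≤ D := by simp only [hD]; exact_mod_cast hd
  have hB1 : (1:ℝ) ≤ B := by
    have : (0:ℝ) ≤ (q:ℝ) := Nat.cast_nonneg q
    simp only [hBdef]; linarith
  have hBD : |B * D - N| ≤ D := by
    rw [show B * D - N = (((2 * q + 1 : ℤ) * d - (2 * n + 1) : ℤ) : ℝ) by push_cast; ring,
      ← Int.cast_abs, hD]
    exact_mod_cast hkey
  have hBA : |B - N / D| ≤ 1 := by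
    have heq : B - N / D = (B * D - N) / D := by field_simp
    rw [heq, abs_div, abs_of_pos hDpos, div_le_one hDpos]
    exact hBD
  have hBA' := abs_le.mp hBA
  have h1 : |B ^ 2 - (N / D) ^ 2| ≤ 2 * (N / D) + 1 := by
    have hND : 0 < N / D := by positivity
    rw [abs_le]
    constructor <;> nlinarith
  have heq2 : (B ^ 2 - 1) / N ^ 2 - 1 / D ^ 2 = (B ^ 2 - 1 - (N / D) ^ 2) / N ^ 2 := by
    field_simp [hNpos.ne', hDpos.ne']
    try ring
    try (left; trivial)
  rw [heq2, abs_div, abs_of_pos (by positivity : (0:ℝ) < N ^ 2)]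
  have h3 : |B ^ 2 - 1 - (N / D) ^ 2| ≤ 2 * (N / D) + 2 := by
    have := abs_sub_abs_le_abs_sub (B ^ 2 - (N / D) ^ 2) 1
    have h4 : |B ^ 2 - 1 - (N / D) ^ 2| ≤ |B ^ 2 - (N / D) ^ 2| + 1 := by
      have : B ^ 2 - 1 - (N / D) ^ 2 = (B ^ 2 - (N / D) ^ 2) + (-1) := by ring
      rw [this]
      calc |(B ^ 2 - (N / D) ^ 2) + (-1)| ≤ |B ^ 2 - (N / D) ^ 2| + |(-1 : ℝ)| := abs_add_le _ _
        _ = |B ^ 2 - (N / D) ^ 2| + 1 := by rw [abs_neg, abs_one]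
    linarith
  calc |B ^ 2 - 1 - (N / D) ^ 2| / N ^ 2 ≤ (2 * (N / D) + 2) / N ^ 2 := by
        gcongr
    _ = 2 / (D * N) + 2 / N ^ 2 := by field_simp




noncomputable def tpart (n : ℕ) : ℝ := ∑ d ∈ Finset.Icc 1 n, (moebius d : ℝ) / (d:ℝ) ^ 2

lemma tendsto_tpart : Tendsto tpart atTop (nhds (6 / Real.pi ^ 2)) := by
  have h1 := hasSum_moebius_div_sq.tendsto_sum_nat
  have h2 : Tendsto (fun n => ∑ d ∈ Finset.range (n + 1), (moebius d : ℝ) / (d:ℝ) ^ 2)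
      atTop (nhds (6 / Real.pi ^ 2)) := h1.comp (tendsto_add_atTop_nat 1)
  refine h2.congr fun n => ?_
  refine (Finset.sum_subset (fun d hd => Finset.mem_range.mpr (by
    have := (Finset.mem_Icc.mp hd).2; omega)) (fun d hd hnd => ?_)).symm
  have : d = 0 := by
    simp only [Finset.mem_range] at hd
    simp only [Finset.mem_Icc] at hnd
    omega
  simp [this]

lemma abs_moebius_real_le_one (d : ℕ) : |(moebius d : ℝ)| ≤ 1 := by
  have := ArithmeticFunction.abs_moebius_le_one (n := d)
  exact_mod_cast (by exact_mod_cast this : ((|moebius d| : ℤ) : ℝ) ≤ 1)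

lemma sum_inv_le (n : ℕ) : ∑ d ∈ Finset.Icc 1 n, (d:ℝ)⁻¹ ≤ 1 + Real.log n := by
  have h1 : ((harmonic n : ℚ) : ℝ) = ∑ d ∈ Finset.Icc 1 n, (d:ℝ)⁻¹ := by
    rw [harmonic_eq_sum_Icc]
    push_cast
    rfl
  rw [← h1]
  exact harmonic_le_one_add_log n

lemma diff_bound (n : ℕ) (hn : 1 ≤ n) :
    |(∑ d ∈ Finset.Icc 1 n, (moebius d : ℝ) * ((2 * ((n / d : ℕ) : ℝ) + 1) ^ 2 - 1))
        / (2 * (n:ℝ) + 1) ^ 2 - tpart n|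
      ≤ (2 + 2 * Real.log n) / n + 1 / n := by
  have hN : (0:ℝ) < 2 * (n:ℝ) + 1 := by positivity
  have hstep : (∑ d ∈ Finset.Icc 1 n, (moebius d : ℝ) * ((2 * ((n / d : ℕ) : ℝ) + 1) ^ 2 - 1))
        / (2 * (n:ℝ) + 1) ^ 2 - tpart n
      = ∑ d ∈ Finset.Icc 1 n, (moebius d : ℝ) *
          (((2 * ((n / d : ℕ) : ℝ) + 1) ^ 2 - 1) / (2 * (n:ℝ) + 1) ^ 2 - 1 / (d:ℝ) ^ 2) := by
    rw [tpart, Finset.sum_div, ← Finset.sum_sub_distrib]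
    refine Finset.sum_congr rfl fun d hd => ?_
    ring
  rw [hstep]
  calc |∑ d ∈ Finset.Icc 1 n, (moebius d : ℝ) *
          (((2 * ((n / d : ℕ) : ℝ) + 1) ^ 2 - 1) / (2 * (n:ℝ) + 1) ^ 2 - 1 / (d:ℝ) ^ 2)|
      ≤ ∑ d ∈ Finset.Icc 1 n, |(moebius d : ℝ) *
          (((2 * ((n / d : ℕ) : ℝ) + 1) ^ 2 - 1) / (2 * (n:ℝ) + 1) ^ 2 - 1 / (d:ℝ) ^ 2)| :=
        Finset.abs_sum_le_sum_abs _ _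
    _ ≤ ∑ d ∈ Finset.Icc 1 n, (2 / ((d:ℝ) * (2 * (n:ℝ) + 1)) + 2 / (2 * (n:ℝ) + 1) ^ 2) := by
        refine Finset.sum_le_sum fun d hd => ?_
        obtain ⟨hd1, -⟩ := Finset.mem_Icc.mp hd
        rw [abs_mul]
        calc |(moebius d : ℝ)| * _ ≤ 1 * |((2 * ((n / d : ℕ) : ℝ) + 1) ^ 2 - 1) /
              (2 * (n:ℝ) + 1) ^ 2 - 1 / (d:ℝ) ^ 2| := by
              apply mul_le_mul_of_nonneg_right (abs_moebius_real_le_one d) (abs_nonneg _)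
          _ = _ := one_mul _
          _ ≤ _ := term_bound n d hd1
    _ = (2 / (2 * (n:ℝ) + 1)) * ∑ d ∈ Finset.Icc 1 n, (d:ℝ)⁻¹
          + n * (2 / (2 * (n:ℝ) + 1) ^ 2) := by
        rw [Finset.sum_add_distrib, Finset.sum_const, Nat.card_Icc, Finset.mul_sum]
        congr 1
        · refine Finset.sum_congr rfl fun d hd => ?_
          obtain ⟨hd1, -⟩ := Finset.mem_Icc.mp hd
          have : (0:ℝ) < d := by exact_mod_cast hd1
          field_simp
          try ring
        · simp only [Nat.add_sub_cancel, nsmul_eq_mul]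
    _ ≤ (2 / (2 * (n:ℝ) + 1)) * (1 + Real.log n) + n * (2 / (2 * (n:ℝ) + 1) ^ 2) := by
        have hlog : (0:ℝ) ≤ Real.log n := Real.log_nonneg (by exact_mod_cast hn)
        gcongr
        exact sum_inv_le n
    _ ≤ (2 + 2 * Real.log n) / n + 1 / n := by
        have hn1 : (1:ℝ) ≤ (n:ℝ) := by exact_mod_cast hn
        have hlog : (0:ℝ) ≤ Real.log n := Real.log_nonneg hn1
        have h1 : (2 / (2 * (n:ℝ) + 1)) * (1 + Real.log n) ≤ (2 + 2 * Real.log n) / n := by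
          rw [div_mul_eq_mul_div, div_le_div_iff₀ hN (by linarith)]
          nlinarith
        have h2 : (n:ℝ) * (2 / (2 * (n:ℝ) + 1) ^ 2) ≤ 1 / n := by
          rw [mul_div_assoc', div_le_div_iff₀ (by positivity) (by linarith)]
          nlinarith
        linarith

lemma nat_card_eq (n : ℕ) :
    (Nat.card {p : ℤ × ℤ // |p.1| ≤ (n : ℤ) ∧ |p.2| ≤ (n : ℤ) ∧ Int.gcd p.1 p.2 = 1} : ℝ)
    = ((((Finset.Icc (-(n:ℤ)) n ×ˢ Finset.Icc (-(n:ℤ)) n).filter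
      (fun p : ℤ × ℤ => Int.gcd p.1 p.2 = 1)).card : ℕ) : ℝ) := by
  congr 1
  have hset : {p : ℤ × ℤ | |p.1| ≤ (n : ℤ) ∧ |p.2| ≤ (n : ℤ) ∧ Int.gcd p.1 p.2 = 1}
      = ↑((Finset.Icc (-(n:ℤ)) n ×ˢ Finset.Icc (-(n:ℤ)) n).filter
        (fun p : ℤ × ℤ => Int.gcd p.1 p.2 = 1)) := by
    ext p
    simp [Finset.mem_filter, Finset.mem_product, Finset.mem_Icc, abs_le, and_assoc]
  calc Nat.card {p : ℤ × ℤ // |p.1| ≤ (n : ℤ) ∧ |p.2| ≤ (n : ℤ) ∧ Int.gcd p.1 p.2 = 1}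
      = Set.ncard {p : ℤ × ℤ | |p.1| ≤ (n : ℤ) ∧ |p.2| ≤ (n : ℤ) ∧ Int.gcd p.1 p.2 = 1} :=
        (Nat.card_coe_set_eq _)
    _ = _ := by rw [hset, Set.ncard_coe_finset]

theorem density_visible_Z2 :
    Tendsto (fun n : ℕ =>
        (Nat.card {p : ℤ × ℤ // |p.1| ≤ (n : ℤ) ∧ |p.2| ≤ (n : ℤ) ∧
            Int.gcd p.1 p.2 = 1} : ℝ) / ((2 * (n : ℝ) + 1) ^ 2))
      atTop (nhds (6 / Real.pi ^ 2)) := by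
  set a : ℕ → ℝ := fun n =>
    (∑ d ∈ Finset.Icc 1 n, (moebius d : ℝ) * ((2 * ((n / d : ℕ) : ℝ) + 1) ^ 2 - 1))
      / (2 * (n:ℝ) + 1) ^ 2 with ha
  have hfun : ∀ n : ℕ,
      (Nat.card {p : ℤ × ℤ // |p.1| ≤ (n : ℤ) ∧ |p.2| ≤ (n : ℤ) ∧
            Int.gcd p.1 p.2 = 1} : ℝ) / ((2 * (n : ℝ) + 1) ^ 2) = a n := by
    intro n
    rw [nat_card_eq n, ha]
    congr 1
    have := main_count n
    have h2 : ((((Finset.Icc (-(n:ℤ)) n ×ˢ Finset.Icc (-(n:ℤ)) n).filter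
        (fun p : ℤ × ℤ => Int.gcd p.1 p.2 = 1)).card : ℕ) : ℝ)
        = ((∑ d ∈ Finset.Icc 1 n, moebius d * ((2 * ((n / d : ℕ) : ℤ) + 1) ^ 2 - 1) : ℤ) : ℝ) := by
      exact_mod_cast congrArg (fun z : ℤ => (z : ℝ)) this
    rw [h2]
    push_cast
    rfl
  simp only [funext hfun]
  -- now show Tendsto a
  have hdiff0 : Tendsto (fun n => a n - tpart n) atTop (nhds 0) := by
    have hE : Tendsto (fun n : ℕ => (2 + 2 * Real.log n) / n + 1 / n) atTop (nhds 0) := by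
      have l1 : Tendsto (fun n : ℕ => 2 / (n:ℝ)) atTop (nhds 0) :=
        tendsto_const_div_atTop_nhds_zero_nat 2
      have l2 : Tendsto (fun n : ℕ => 1 / (n:ℝ)) atTop (nhds 0) :=
        tendsto_const_div_atTop_nhds_zero_nat 1
      have l3 : Tendsto (fun x : ℝ => Real.log x / x) atTop (nhds 0) :=
        Real.isLittleO_log_id_atTop.tendsto_div_nhds_zero
      have l4 : Tendsto (fun n : ℕ => Real.log n / n) atTop (nhds 0) :=
        l3.comp tendsto_natCast_atTop_atTop
      have := (l1.add ((l4.const_mul 2))).add l2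
      simp only [mul_zero, add_zero, zero_add] at this
      refine this.congr fun n => ?_
      field_simp
      try ring
    refine squeeze_zero_norm' ?_ hE
    filter_upwards [eventually_ge_atTop 1] with n hn
    exact diff_bound n hn
  have := tendsto_tpart.add hdiff0
  simpa using this

end
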